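/- Let g be the 8-dimensional Lie algebra L_{8,3} with basis e₁,…,e₈ and brackets [e₁,e₂]=e₃, [e₁,e₃]=-e₂, [e₂,e₃]=e₁, [e₁,e₅]=e₆, [e₁,e₆]=-e₅, [e₂,e₅]=e₇, [e₂,e₇]=-e₅, [e₃,e₆]=e₇, [e₃,e₇]=-e₆, [e₄,e₈]=e₄, [e₅,e₈]=e₅, [e₆,e₈]=e₆, [e₇,e₈]=e₇, equipped with the symplectic form ω = e¹∧e⁷ + e²∧e⁵ + e³∧e⁶ - 2e⁴∧e⁸. Then J = span(e₄,e₅,e₆,e₇) is a Lagrangian ideal: J is an ideal of g, ω vanishes identically on J × J, and dim J = 4 = ½ dim g. -/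

import Mathlib

theorem L83_lagrangian_ideal (g : Type*) [LieRing g] [LieAlgebra ℝ g]
    [FiniteDimensional ℝ g]
    (b : Module.Basis (Fin 8) ℝ g)
    -- non-vanishing brackets of L_{8,3} (e₁,…,e₈ ↦ b 0,…,b 7)
    (h12 : ⁅b 0, b 1⁆ = b 2) (h13 : ⁅b 0, b 2⁆ = -b 1) (h23 : ⁅b 1, b 2⁆ = b 0)
    (h15 : ⁅b 0, b 4⁆ = b 5) (h16 : ⁅b 0, b 5⁆ = -b 4)
    (h25 : ⁅b 1, b 4⁆ = b 6) (h27 : ⁅b 1, b 6⁆ = -b 4)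
    (h36 : ⁅b 2, b 5⁆ = b 6) (h37 : ⁅b 2, b 6⁆ = -b 5)
    (h48 : ⁅b 3, b 7⁆ = b 3) (h58 : ⁅b 4, b 7⁆ = b 4)
    (h68 : ⁅b 5, b 7⁆ = b 5) (h78 : ⁅b 6, b 7⁆ = b 6)
    -- remaining brackets vanish
    (h14 : ⁅b 0, b 3⁆ = 0) (h17 : ⁅b 0, b 6⁆ = 0) (h18 : ⁅b 0, b 7⁆ = 0)
    (h24 : ⁅b 1, b 3⁆ = 0) (h26 : ⁅b 1, b 5⁆ = 0) (h28 : ⁅b 1, b 7⁆ = 0)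
    (h34 : ⁅b 2, b 3⁆ = 0) (h35 : ⁅b 2, b 4⁆ = 0) (h38 : ⁅b 2, b 7⁆ = 0)
    (h45 : ⁅b 3, b 4⁆ = 0) (h46 : ⁅b 3, b 5⁆ = 0) (h47 : ⁅b 3, b 6⁆ = 0)
    (h56 : ⁅b 4, b 5⁆ = 0) (h57 : ⁅b 4, b 6⁆ = 0) (h67 : ⁅b 5, b 6⁆ = 0)
    -- ω = e¹∧e⁷ + e²∧e⁵ + e³∧e⁶ - 2 e⁴∧e⁸
    (ω : g →ₗ[ℝ] g →ₗ[ℝ] ℝ)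
    (hω : ∀ i j, ω (b i) (b j) =
      (!![0,0,0,0,0,0,1,0; 0,0,0,0,1,0,0,0; 0,0,0,0,0,1,0,0; 0,0,0,0,0,0,0,-2;
          0,-1,0,0,0,0,0,0; 0,0,-1,0,0,0,0,0; -1,0,0,0,0,0,0,0; 0,0,0,2,0,0,0,0]
        : Matrix (Fin 8) (Fin 8) ℝ) i j) :
    (∀ x : g, ∀ y ∈ Submodule.span ℝ ({b 3, b 4, b 5, b 6} : Set g),
        ⁅x, y⁆ ∈ Submodule.span ℝ ({b 3, b 4, b 5, b 6} : Set g)) ∧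
    (∀ x ∈ Submodule.span ℝ ({b 3, b 4, b 5, b 6} : Set g),
      ∀ y ∈ Submodule.span ℝ ({b 3, b 4, b 5, b 6} : Set g), ω x y = 0) ∧
    Module.finrank ℝ ↥(Submodule.span ℝ ({b 3, b 4, b 5, b 6} : Set g)) = 4 ∧
    Module.finrank ℝ g = 8 := by

  set J := Submodule.span ℝ ({b 3, b 4, b 5, b 6} : Set g) with hJ
  have mem3 : b 3 ∈ J := Submodule.subset_span (by simp)
  have mem4 : b 4 ∈ J := Submodule.subset_span (by simp)
  have mem5 : b 5 ∈ J := Submodule.subset_span (by simp)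
  have mem6 : b 6 ∈ J := Submodule.subset_span (by simp)
  -- brackets of basis vectors with generators lie in J
  have hgen : ∀ i : Fin 8, ∀ z ∈ ({b 3, b 4, b 5, b 6} : Set g), ⁅b i, z⁆ ∈ J := by
    intro i z hz
    simp only [Set.mem_insert_iff, Set.mem_singleton_iff] at hz
    fin_cases i <;> rcases hz with rfl | rfl | rfl | rfl <;>
      simp only [Fin.isValue, Fin.reduceFinMk] <;>
      first
        | (rw [show (⟨0, by norm_num⟩ : Fin 8) = 0 from rfl]) <;> skip
        | skip
    all_goals
      first
        | (rw [lie_self]; exact J.zero_mem)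
        | (rw [h14]; exact J.zero_mem) | (rw [h15]; exact mem5)
        | (rw [h16]; exact J.neg_mem mem4) | (rw [h17]; exact J.zero_mem)
        | (rw [h24]; exact J.zero_mem) | (rw [h25]; exact mem6)
        | (rw [h26]; exact J.zero_mem) | (rw [h27]; exact J.neg_mem mem4)
        | (rw [h34]; exact J.zero_mem) | (rw [h35]; exact J.zero_mem)
        | (rw [h36]; exact mem6) | (rw [h37]; exact J.neg_mem mem5)
        | (rw [h45]; exact J.zero_mem) | (rw [h46]; exact J.zero_mem)
        | (rw [h47]; exact J.zero_mem)
        | (rw [← lie_skew, h45]; simpa using J.zero_mem)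
        | (rw [← lie_skew, h46]; simpa using J.zero_mem)
        | (rw [← lie_skew, h47]; simpa using J.zero_mem)
        | (rw [← lie_skew, h56]; simpa using J.zero_mem)
        | (rw [← lie_skew, h57]; simpa using J.zero_mem)
        | (rw [← lie_skew, h67]; simpa using J.zero_mem)
        | (rw [h56]; exact J.zero_mem) | (rw [h57]; exact J.zero_mem)
        | (rw [h67]; exact J.zero_mem)
        | (rw [← lie_skew, h48]; exact J.neg_mem mem3)
        | (rw [← lie_skew, h58]; exact J.neg_mem mem4)
        | (rw [← lie_skew, h68]; exact J.neg_mem mem5)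
        | (rw [← lie_skew, h78]; exact J.neg_mem mem6)
  have hbi : ∀ i : Fin 8, ∀ y ∈ J, ⁅b i, y⁆ ∈ J := by
    intro i y hy
    have hle : J ≤ J.comap (LieAlgebra.ad ℝ g (b i) : g →ₗ[ℝ] g) := by
      rw [hJ, Submodule.span_le]
      intro z hz
      simpa [LieAlgebra.ad_apply] using hgen i z hz
    simpa [LieAlgebra.ad_apply] using hle hy
  refine ⟨?_, ?_, ?_, ?_⟩
  · intro x y hy
    have hx : x ∈ Submodule.span ℝ (Set.range b) := by rw [b.span_eq]; trivial
    have hle : Submodule.span ℝ (Set.range b) ≤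
        J.comap ((LinearMap.mk₂ ℝ (fun a c : g => ⁅a, c⁆) add_lie smul_lie lie_add lie_smul).flip y) := by
      rw [Submodule.span_le]
      rintro _ ⟨i, rfl⟩
      simpa [LieAlgebra.ad_apply] using hbi i y hy
    simpa [LieAlgebra.ad_apply] using hle hx
  · intro x hx y hy
    have hzy : ∀ z ∈ ({b 3, b 4, b 5, b 6} : Set g), ω z y = 0 := by
      intro z hz
      have hle : J ≤ LinearMap.ker (ω z) := by
        rw [hJ, Submodule.span_le]
        intro w hw
        simp only [Set.mem_insert_iff, Set.mem_singleton_iff] at hz hw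
        simp only [SetLike.mem_coe, LinearMap.mem_ker]
        rcases hz with rfl | rfl | rfl | rfl <;> rcases hw with rfl | rfl | rfl | rfl <;>
          rw [hω] <;> rfl
      simpa using hle hy
    have hle : J ≤ LinearMap.ker (ω.flip y) := by
      rw [hJ, Submodule.span_le]
      intro z hz
      simpa [LinearMap.flip_apply] using hzy z hz
    simpa using hle hx
  · have hf : Function.Injective (![3, 4, 5, 6] : Fin 4 → Fin 8) := by decide
    have hli : LinearIndependent ℝ (b ∘ ![3, 4, 5, 6]) :=
      b.linearIndependent.comp _ hf
    have hset : ({b 3, b 4, b 5, b 6} : Set g) = Set.range (b ∘ ![3, 4, 5, 6]) := by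
      ext z
      simp only [Set.mem_range, Set.mem_insert_iff, Set.mem_singleton_iff]
      constructor
      · rintro (rfl | rfl | rfl | rfl)
        exacts [⟨0, rfl⟩, ⟨1, rfl⟩, ⟨2, rfl⟩, ⟨3, rfl⟩]
      · rintro ⟨i, rfl⟩
        fin_cases i <;> simp
    rw [hJ, hset, finrank_span_eq_card hli]
    simp
  · rw [Module.finrank_eq_card_basis b]
    simp
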